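/- arXiv:2512.15351 — 2 statements merged into one kernel-verified Lean document; each statement's English description precedes it below -/
import Mathlib

section
/- Let G and H be simple graphs on disjoint vertex sets. The chromatic polynomial of their join satisfies χ_{G∇H}(t) = φ_χ[ φ_χ^{−1}[χ_G(t)] · φ_χ^{−1}[χ_H(t)] ], where φ_χ is the linear operator on polynomials with φ_χ[tⁿ] = (t)_n (falling factorial), and φ_χ^{−1}[tⁿ] = ∑_k S(n,k) t^k with S(n,k) the Stirling numbers of the second kind. -/
open Polynomial

/-- The join `G ∇ H` of two graphs on disjoint vertex sets. -/
def graphJoin {V W : Type*} (G : SimpleGraph V) (H : SimpleGraph W) : SimpleGraph (V ⊕ W) where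
  Adj x y := match x, y with
    | Sum.inl a, Sum.inl b => G.Adj a b
    | Sum.inr a, Sum.inr b => H.Adj a b
    | Sum.inl _, Sum.inr _ => True
    | Sum.inr _, Sum.inl _ => True
  symm := ⟨by rintro (a | a) (b | b) h <;> simp_all <;> exact h.symm⟩
  loopless := ⟨by rintro (a | a) h <;> simp_all⟩

/-- The number of proper colorings of `G` with `t` colors. -/
noncomputable def colorCount {V : Type*} (G : SimpleGraph V) (t : ℕ) : ℕ :=
  Nat.card (G.Coloring (Fin t))

/-- `S` is a partition of `Fin n` into nonempty blocks. -/
def IsSetPartition (n : ℕ) (S : Finset (Finset (Fin n))) : Prop :=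
  (∀ s ∈ S, s.Nonempty) ∧ ∀ x : Fin n, ∃! s, s ∈ S ∧ x ∈ s

/-- The Stirling number of the second kind `S(n,k)`. -/
noncomputable def stirling2 (n k : ℕ) : ℕ :=
  Nat.card {S : Finset (Finset (Fin n)) // S.card = k ∧ IsSetPartition n S}

/-- The linear operator `φ_χ` with `φ_χ[tⁿ] = (t)_n`, extended linearly. -/
noncomputable def phiChi (p : Polynomial ℚ) : Polynomial ℚ :=
  p.sum fun n a => a • ∏ i ∈ Finset.range n, (X - C (i : ℚ))

/-- The inverse operator `φ_χ⁻¹` with `φ_χ⁻¹[tⁿ] = ∑_k S(n,k) t^k`. -/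
noncomputable def phiChiInv (p : Polynomial ℚ) : Polynomial ℚ :=
  p.sum fun n a => a • ∑ k ∈ Finset.range (n + 1), (stirling2 n k : ℚ) • X ^ k

namespace ChromJoin

open Finset

/-- falling factorial polynomial -/
noncomputable def F (n : ℕ) : Polynomial ℚ := ∏ i ∈ Finset.range n, (X - C (i : ℚ))

lemma F_eq_descPochhammer (n : ℕ) : F n = descPochhammer ℚ n := by
  induction n with
  | zero => simp [F]
  | succ n ih =>
    rw [F, Finset.prod_range_succ, ← F, ih, descPochhammer_succ_right, C_eq_natCast]

lemma F_eval (t n : ℕ) : (F n).eval (t : ℚ) = t.descFactorial n := by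
  rw [F_eq_descPochhammer, descPochhammer_eval_eq_descFactorial]

lemma F_monic (n : ℕ) : (F n).Monic := by
  apply monic_prod_of_monic
  intro i _
  exact monic_X_sub_C _

lemma F_natDegree (n : ℕ) : (F n).natDegree = n := by
  rw [F, natDegree_prod]
  · simp only [natDegree_X_sub_C, Finset.sum_const, smul_eq_mul, mul_one, Finset.card_range]
  · intro i _
    exact X_sub_C_ne_zero _

section Partitions

variable {α : Type*} [Fintype α] [DecidableEq α]

/-- partitions of `α` into nonempty independent sets of `G` -/
def IP (G : SimpleGraph α) (S : Finset (Finset α)) : Prop :=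
  (∀ s ∈ S, s.Nonempty) ∧ (∀ x : α, ∃! s, s ∈ S ∧ x ∈ s) ∧
    ∀ s ∈ S, ∀ a ∈ s, ∀ b ∈ s, ¬ G.Adj a b

open Classical in
noncomputable def parts (G : SimpleGraph α) : Finset (Finset (Finset α)) :=
  Finset.univ.filter (IP G)

lemma mem_parts {G : SimpleGraph α} {S : Finset (Finset α)} : S ∈ parts G ↔ IP G S := by
  classical
  simp [parts]

lemma IP.card_le {G : SimpleGraph α} {S : Finset (Finset α)} (hS : IP G S) :
    S.card ≤ Fintype.card α := by
  have hdisj : ∀ s ∈ S, ∀ t ∈ S, s ≠ t → Disjoint s t := by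
    intro s hs t ht hne
    rw [Finset.disjoint_left]
    intro x hxs hxt
    exact hne (((hS.2.1 x).unique ⟨hs, hxs⟩ ⟨ht, hxt⟩))
  have hbu : S.biUnion id = Finset.univ := by
    apply Finset.eq_univ_of_forall
    intro x
    obtain ⟨s, ⟨hs, hxs⟩, -⟩ := hS.2.1 x
    exact Finset.mem_biUnion.mpr ⟨s, hs, hxs⟩
  have : (S.biUnion id).card = ∑ s ∈ S, (id s).card := Finset.card_biUnion hdisj
  rw [hbu, Finset.card_univ] at this
  calc S.card = ∑ _s ∈ S, 1 := by simp
    _ ≤ ∑ s ∈ S, (id s).card := Finset.sum_le_sum fun s hs =>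
        Finset.card_pos.mpr (hS.1 s hs)
    _ = Fintype.card α := this.symm

/-- the "partition generating polynomial" -/
noncomputable def sigmaP (G : SimpleGraph α) : Polynomial ℚ :=
  ∑ S ∈ parts G, X ^ S.card

/-- its image under `phiChi` -/
noncomputable def tauP (G : SimpleGraph α) : Polynomial ℚ :=
  ∑ S ∈ parts G, F S.card

end Partitions

section Counting

variable {α : Type*} [Fintype α] [DecidableEq α]

def blk (f : α → Fin t) (v : α) : Finset α := Finset.univ.filter (fun w => f w = f v)

lemma mem_blk {t : ℕ} {f : α → Fin t} {w v : α} : w ∈ blk f v ↔ f w = f v := by simp [blk]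

lemma blk_eq {t : ℕ} {f : α → Fin t} {x v : α} (h : f x = f v) : blk f x = blk f v := by
  ext w; simp [mem_blk, h]

def ker (f : α → Fin t) : Finset (Finset α) := Finset.univ.image (blk f)

lemma mem_ker {t : ℕ} {f : α → Fin t} {s : Finset α} : s ∈ ker f ↔ ∃ v, blk f v = s := by
  simp [ker]

lemma blk_self {t : ℕ} (f : α → Fin t) (v : α) : v ∈ blk f v := mem_blk.mpr rfl

lemma eq_blk_of_mem {t : ℕ} {f : α → Fin t} {s : Finset α} {x : α}
    (hs : s ∈ ker f) (hx : x ∈ s) : s = blk f x := by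
  obtain ⟨v, rfl⟩ := mem_ker.mp hs
  exact (blk_eq (mem_blk.mp hx)).symm

lemma ker_IP (G : SimpleGraph α) {t : ℕ} {f : α → Fin t}
    (hf : ∀ a b, G.Adj a b → f a ≠ f b) : IP G (ker f) := by
  refine ⟨?_, ?_, ?_⟩
  · intro s hs; obtain ⟨v, rfl⟩ := mem_ker.mp hs; exact ⟨v, blk_self f v⟩
  · intro x
    refine ⟨blk f x, ⟨mem_ker.mpr ⟨x, rfl⟩, blk_self f x⟩, ?_⟩
    rintro s ⟨hs, hxs⟩
    exact eq_blk_of_mem hs hxs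
  · intro s hs a ha b hb hadj
    obtain ⟨v, rfl⟩ := mem_ker.mp hs
    exact hf a b hadj (by rw [mem_blk.mp ha, mem_blk.mp hb])

noncomputable def blkOf {G : SimpleGraph α} {S : Finset (Finset α)} (hS : IP G S) (v : α) :
    Finset α := (hS.2.1 v).exists.choose

lemma blkOf_mem {G : SimpleGraph α} {S : Finset (Finset α)} (hS : IP G S) (v : α) :
    blkOf hS v ∈ S := (hS.2.1 v).exists.choose_spec.1

lemma mem_blkOf {G : SimpleGraph α} {S : Finset (Finset α)} (hS : IP G S) (v : α) :
    v ∈ blkOf hS v := (hS.2.1 v).exists.choose_spec.2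

lemma blkOf_eq {G : SimpleGraph α} {S : Finset (Finset α)} (hS : IP G S) {v : α}
    {s : Finset α} (hs : s ∈ S) (hv : v ∈ s) : blkOf hS v = s :=
  (hS.2.1 v).unique ⟨blkOf_mem hS v, mem_blkOf hS v⟩ ⟨hs, hv⟩

lemma emb_heq {X c : Type*} {A B : Finset X} (h : A = B) (g₁ : ↥A ↪ c) (g₂ : ↥B ↪ c)
    (hg : ∀ x (hx : x ∈ A), g₁ ⟨x, hx⟩ = g₂ ⟨x, h ▸ hx⟩) : HEq g₁ g₂ := by
  subst h
  exact heq_of_eq (by ext ⟨x, hx⟩; exact hg x hx)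

noncomputable def colorEquiv (G : SimpleGraph α) (t : ℕ) :
    {f : α → Fin t // ∀ a b, G.Adj a b → f a ≠ f b} ≃
      Σ S : {S : Finset (Finset α) // IP G S}, (↥(S.1) ↪ Fin t) where
  toFun f := ⟨⟨ker f.1, ker_IP G f.2⟩,
    ⟨fun s => f.1 (mem_ker.mp s.2).choose, by
      rintro ⟨s₁, h₁⟩ ⟨s₂, h₂⟩ h
      have e₁ := (mem_ker.mp h₁).choose_spec
      have e₂ := (mem_ker.mp h₂).choose_spec
      simp only at h
      apply Subtype.ext
      simp only
      rw [← e₁, ← e₂]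
      exact blk_eq h⟩⟩
  invFun Sg := ⟨fun v => Sg.2 ⟨blkOf Sg.1.2 v, blkOf_mem Sg.1.2 v⟩, by
    intro a b hadj h
    have hblk : blkOf Sg.1.2 a = blkOf Sg.1.2 b :=
      congrArg Subtype.val (Sg.2.injective h)
    refine Sg.1.2.2.2 (blkOf Sg.1.2 b) (blkOf_mem Sg.1.2 b) a ?_ b (mem_blkOf Sg.1.2 b) hadj
    rw [← hblk]; exact mem_blkOf Sg.1.2 a⟩
  left_inv f := by
    apply Subtype.ext
    funext v
    simp only
    set s := blkOf (ker_IP G f.2) v with hs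
    have hsker : s ∈ ker f.1 := blkOf_mem _ v
    have hrep := (mem_ker.mp hsker).choose_spec
    have hvs : v ∈ s := mem_blkOf _ v
    have : v ∈ blk f.1 (mem_ker.mp hsker).choose := by rw [hrep]; exact hvs
    exact (mem_blk.mp this).symm
  right_inv Sg := by
    obtain ⟨⟨S, hS⟩, g⟩ := Sg
    set f : α → Fin t := fun v => g ⟨blkOf hS v, blkOf_mem hS v⟩ with hf
    have hfproper : ∀ a b, G.Adj a b → f a ≠ f b := by
      intro a b hadj h
      have hblk : blkOf hS a = blkOf hS b := congrArg Subtype.val (g.injective h)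
      refine hS.2.2 (blkOf hS b) (blkOf_mem hS b) a ?_ b (mem_blkOf hS b) hadj
      rw [← hblk]; exact mem_blkOf hS a
    have hblk_eq : ∀ v, blk f v = blkOf hS v := by
      intro v
      ext w
      rw [mem_blk]
      constructor
      · intro hw
        have : blkOf hS w = blkOf hS v := congrArg Subtype.val (g.injective hw)
        rw [← this]; exact mem_blkOf hS w
      · intro hw
        have : blkOf hS w = blkOf hS v := blkOf_eq hS (blkOf_mem hS v) hw
        show g _ = g _
        congr 1
        exact Subtype.ext this
    have hker : ker f = S := by
      ext s
      rw [mem_ker]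
      constructor
      · rintro ⟨v, rfl⟩
        rw [hblk_eq]; exact blkOf_mem hS v
      · intro hsS
        obtain ⟨x, hx⟩ := hS.1 s hsS
        exact ⟨x, by rw [hblk_eq, blkOf_eq hS hsS hx]⟩
    refine Sigma.ext (Subtype.ext hker) (emb_heq hker _ _ ?_)
    intro s hs
    simp only
    have hrep := (mem_ker.mp hs).choose_spec
    set r := (mem_ker.mp hs).choose with hr
    have hrs : r ∈ s := by rw [← hrep]; exact blk_self f r
    have : blkOf hS r = s := blkOf_eq hS (hker ▸ hs) hrs
    show g ⟨blkOf hS r, _⟩ = g ⟨s, _⟩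
    congr 1
    exact Subtype.ext this

lemma tauP_eval (G : SimpleGraph α) (t : ℕ) :
    (tauP G).eval (t : ℚ) = colorCount G t := by
  classical
  have e1 : G.Coloring (Fin t) ≃ {f : α → Fin t // ∀ a b, G.Adj a b → f a ≠ f b} :=
    { toFun := fun c => ⟨c, fun a b h => c.valid h⟩
      invFun := fun f => SimpleGraph.Coloring.mk f.1 (fun {a b} h => f.2 a b h)
      left_inv := fun c => rfl
      right_inv := fun f => rfl }
  have h1 : colorCount G t
      = Nat.card (Σ S : {S : Finset (Finset α) // IP G S}, (↥(S.1) ↪ Fin t)) :=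
    Nat.card_congr (e1.trans (colorEquiv G t))
  rw [h1, Nat.card_eq_fintype_card, Fintype.card_sigma]
  have h2 : ∀ S : {S : Finset (Finset α) // IP G S},
      Fintype.card (↥(S.1) ↪ Fin t) = t.descFactorial S.1.card := by
    intro S
    rw [Fintype.card_embedding_eq, Fintype.card_coe, Fintype.card_fin]
  rw [Finset.sum_congr rfl fun S _ => h2 S]
  rw [← Finset.sum_subtype (parts G) (fun S => mem_parts) (fun S => t.descFactorial S.card)]
  rw [tauP, Polynomial.eval_finset_sum, Nat.cast_sum]
  exact Finset.sum_congr rfl fun S _ => F_eval t S.card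

end Counting


section Glue

lemma phiChi_add (p q : Polynomial ℚ) : phiChi (p + q) = phiChi p + phiChi q := by
  apply Polynomial.sum_add_index <;> intros <;> simp [add_smul]

lemma phiChi_smul (a : ℚ) (p : Polynomial ℚ) : phiChi (a • p) = a • phiChi p := by
  rw [phiChi, Polynomial.sum_smul_index]
  · rw [phiChi, Polynomial.sum, Polynomial.sum, Finset.smul_sum]
    apply Finset.sum_congr rfl
    intros; rw [mul_smul]
  · intros; simp

lemma phiChi_zero : phiChi 0 = 0 := Polynomial.sum_zero_index _

lemma phiChi_sub (p q : Polynomial ℚ) : phiChi (p - q) = phiChi p - phiChi q := by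
  have h := phiChi_smul (-1) q
  simp only [neg_smul, one_smul] at h
  rw [sub_eq_add_neg, sub_eq_add_neg, ← h, phiChi_add, h]

lemma phiChi_sum {ι : Type*} (s : Finset ι) (f : ι → Polynomial ℚ) :
    phiChi (∑ i ∈ s, f i) = ∑ i ∈ s, phiChi (f i) := by
  classical
  induction s using Finset.induction_on with
  | empty => simp [phiChi_zero]
  | insert _ _ h ih => rw [Finset.sum_insert h, Finset.sum_insert h, phiChi_add, ih]

lemma phiChi_X_pow (n : ℕ) : phiChi (X ^ n) = F n := by
  rw [← Polynomial.monomial_one_right_eq_X_pow, phiChi, Polynomial.sum_monomial_index]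
  · simp [F]
  · simp

lemma coeff_phiChi_natDegree (p : Polynomial ℚ) :
    (phiChi p).coeff p.natDegree = p.coeff p.natDegree := by
  rw [phiChi, Polynomial.sum, finset_sum_coeff]
  rw [Finset.sum_eq_single p.natDegree]
  · by_cases h : p.natDegree ∈ p.support
    · have h1 : (F p.natDegree).coeff p.natDegree = 1 := by
        have := (F_monic p.natDegree).coeff_natDegree
        rwa [F_natDegree] at this
      rw [coeff_smul, smul_eq_mul,
        show (∏ i ∈ Finset.range p.natDegree, (X - C (i:ℚ))) = F _ from rfl, h1, mul_one]
    · simp at h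
      simp [h]
  · intro k hk hne
    have hlt : (F k).natDegree < p.natDegree := by
      rw [F_natDegree]
      exact lt_of_le_of_ne (le_natDegree_of_mem_supp _ hk) hne
    rw [coeff_smul, show (∏ i ∈ Finset.range k, (X - C (i:ℚ))) = F k from rfl,
      coeff_eq_zero_of_natDegree_lt hlt, smul_zero]
  · intro h
    simp at h
    simp [h]

lemma phiChi_injective : Function.Injective phiChi := by
  intro p q h
  by_contra hne
  have hsub : p - q ≠ 0 := sub_ne_zero.mpr hne
  have h0 : phiChi (p - q) = 0 := by rw [phiChi_sub, h, sub_self]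
  have := coeff_phiChi_natDegree (p - q)
  rw [h0, coeff_zero] at this
  exact (Polynomial.leadingCoeff_ne_zero.mpr hsub) this.symm

lemma phiChi_sigmaP {α : Type*} [Fintype α] [DecidableEq α] (G : SimpleGraph α) :
    phiChi (sigmaP G) = tauP G := by
  rw [sigmaP, phiChi_sum, tauP]
  exact Finset.sum_congr rfl fun S _ => phiChi_X_pow _

lemma eq_of_eval_nat {p q : Polynomial ℚ} (h : ∀ t : ℕ, p.eval (t : ℚ) = q.eval (t : ℚ)) :
    p = q := by
  rw [← sub_eq_zero]
  apply Polynomial.eq_zero_of_infinite_isRoot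
  apply Set.infinite_of_injective_forall_mem (f := fun t : ℕ => (t : ℚ))
  · exact fun a b hab => Nat.cast_injective hab
  · intro t
    simp [Polynomial.IsRoot, h t]

lemma IP_bot_iff {n : ℕ} {S : Finset (Finset (Fin n))} :
    IP (⊥ : SimpleGraph (Fin n)) S ↔ IsSetPartition n S := by
  unfold IP IsSetPartition
  simp

lemma stirling2_eq (n k : ℕ) :
    stirling2 n k = ((parts (⊥ : SimpleGraph (Fin n))).filter (fun S => S.card = k)).card := by
  classical
  rw [stirling2, Nat.card_eq_fintype_card, Fintype.card_subtype]
  congr 1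
  ext S
  simp [mem_parts, IP_bot_iff, and_comm]

lemma colorCount_bot (n t : ℕ) : colorCount (⊥ : SimpleGraph (Fin n)) t = t ^ n := by
  have e : (⊥ : SimpleGraph (Fin n)).Coloring (Fin t) ≃ (Fin n → Fin t) :=
    { toFun := fun c => c
      invFun := fun f => SimpleGraph.Coloring.mk f (fun {a b} h => absurd h (by simp))
      left_inv := fun c => rfl
      right_inv := fun f => rfl }
  rw [colorCount, Nat.card_congr e, Nat.card_eq_fintype_card]
  simp

lemma stirling_identity (n : ℕ) :
    ∑ k ∈ Finset.range (n + 1), (stirling2 n k : ℚ) • F k = X ^ n := by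
  classical
  apply eq_of_eval_nat
  intro t
  rw [Polynomial.eval_finset_sum, Polynomial.eval_pow, Polynomial.eval_X]
  simp only [Polynomial.eval_smul, smul_eq_mul, F_eval]
  have hmaps : ∀ S ∈ parts (⊥ : SimpleGraph (Fin n)),
      S.card ∈ Finset.range (n + 1) := by
    intro S hS
    rw [Finset.mem_range, Nat.lt_succ_iff]
    have := (mem_parts.mp hS).card_le
    rwa [Fintype.card_fin] at this
  have key : ∑ S ∈ parts (⊥ : SimpleGraph (Fin n)), ((t.descFactorial S.card : ℚ))
      = ((t : ℚ)) ^ n := by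
    have h1 := tauP_eval (⊥ : SimpleGraph (Fin n)) t
    rw [colorCount_bot, tauP, Polynomial.eval_finset_sum] at h1
    rw [Finset.sum_congr rfl (fun S _ => F_eval t S.card)] at h1
    rw [h1]
    push_cast
    ring
  rw [← key, ← Finset.sum_fiberwise_of_maps_to hmaps
    (fun S => ((t.descFactorial S.card : ℚ)))]
  apply Finset.sum_congr rfl
  intro k _
  rw [Finset.sum_congr rfl (fun S hS => by
    rw [(Finset.mem_filter.mp hS).2]), Finset.sum_const, stirling2_eq, nsmul_eq_mul]

lemma phiChi_phiChiInv (p : Polynomial ℚ) : phiChi (phiChiInv p) = p := by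
  induction p using Polynomial.induction_on' with
  | add p q hp hq =>
    have : phiChiInv (p + q) = phiChiInv p + phiChiInv q := by
      apply Polynomial.sum_add_index <;> intros <;> simp [add_smul]
    rw [this, phiChi_add, hp, hq]
  | monomial n a =>
    rw [phiChiInv, Polynomial.sum_monomial_index _ _ (by simp)]
    rw [phiChi_smul, phiChi_sum]
    have : ∀ k ∈ Finset.range (n + 1), phiChi ((stirling2 n k : ℚ) • X ^ k)
        = (stirling2 n k : ℚ) • F k := fun k _ => by rw [phiChi_smul, phiChi_X_pow]
    rw [Finset.sum_congr rfl this, stirling_identity]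
    rw [Polynomial.smul_X_eq_monomial]

end Glue

section Join

variable {V W : Type*} [Fintype V] [Fintype W] [DecidableEq V] [DecidableEq W]

/-- embed a finset of `V` into `V ⊕ W` -/
def mapl (s : Finset V) : Finset (V ⊕ W) := s.map ⟨Sum.inl, Sum.inl_injective⟩

def mapr (s : Finset W) : Finset (V ⊕ W) := s.map ⟨Sum.inr, Sum.inr_injective⟩

lemma mem_mapl {s : Finset V} {x : V ⊕ W} : x ∈ mapl s ↔ ∃ a ∈ s, Sum.inl a = x := by
  simp [mapl]

lemma mem_mapr {s : Finset W} {x : V ⊕ W} : x ∈ mapr s ↔ ∃ a ∈ s, Sum.inr a = x := by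
  simp [mapr]

noncomputable def preL (s : Finset (V ⊕ W)) : Finset V :=
  s.preimage Sum.inl Sum.inl_injective.injOn

noncomputable def preR (s : Finset (V ⊕ W)) : Finset W :=
  s.preimage Sum.inr Sum.inr_injective.injOn

lemma mem_preL {s : Finset (V ⊕ W)} {a : V} : a ∈ preL s ↔ Sum.inl a ∈ s := by
  simp [preL]

lemma mem_preR {s : Finset (V ⊕ W)} {a : W} : a ∈ preR s ↔ Sum.inr a ∈ s := by
  simp [preR]

lemma preL_mapl (s : Finset V) : preL (mapl (W := W) s) = s := by
  ext a; simp [mem_preL, mem_mapl]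

lemma preR_mapr (s : Finset W) : preR (mapr (V := V) s) = s := by
  ext a; simp [mem_preR, mem_mapr]

lemma mapl_preL {s : Finset (V ⊕ W)} (h : ∀ x ∈ s, x.isLeft) : mapl (preL s) = s := by
  ext x
  rw [mem_mapl]
  constructor
  · rintro ⟨a, ha, rfl⟩; exact mem_preL.mp ha
  · intro hx
    obtain ⟨a, rfl⟩ := Sum.isLeft_iff.mp (h x hx)
    exact ⟨a, mem_preL.mpr hx, rfl⟩

lemma mapr_preR {s : Finset (V ⊕ W)} (h : ∀ x ∈ s, x.isRight) : mapr (preR s) = s := by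
  ext x
  rw [mem_mapr]
  constructor
  · rintro ⟨a, ha, rfl⟩; exact mem_preR.mp ha
  · intro hx
    obtain ⟨a, rfl⟩ := Sum.isRight_iff.mp (h x hx)
    exact ⟨a, mem_preR.mpr hx, rfl⟩

open Classical in
noncomputable def SL (S : Finset (Finset (V ⊕ W))) : Finset (Finset V) :=
  (S.filter fun s => ∀ x ∈ s, x.isLeft).image preL

open Classical in
noncomputable def SR (S : Finset (Finset (V ⊕ W))) : Finset (Finset W) :=
  (S.filter fun s => ¬ ∀ x ∈ s, x.isLeft).image preR

open Classical in
noncomputable def combine (S₁ : Finset (Finset V)) (S₂ : Finset (Finset W)) :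
    Finset (Finset (V ⊕ W)) :=
  S₁.image mapl ∪ S₂.image mapr

variable {G : SimpleGraph V} {H : SimpleGraph W}

lemma join_adj_lr (a : V) (b : W) : (graphJoin G H).Adj (Sum.inl a) (Sum.inr b) := trivial

lemma right_pure {S : Finset (Finset (V ⊕ W))} (hS : IP (graphJoin G H) S)
    {s : Finset (V ⊕ W)} (hs : s ∈ S) (h : ¬ ∀ x ∈ s, x.isLeft) :
    ∀ x ∈ s, x.isRight := by
  push_neg at h
  obtain ⟨y, hy, hyl⟩ := h
  obtain ⟨b, rfl⟩ := Sum.isRight_iff.mp (Sum.not_isLeft.mp hyl)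
  intro x hx
  rcases x with a | a
  · exact absurd (join_adj_lr a b) (hS.2.2 s hs _ hx _ hy)
  · rfl

lemma left_pure_of_mem {S : Finset (Finset (V ⊕ W))} (hS : IP (graphJoin G H) S)
    {s : Finset (V ⊕ W)} (hs : s ∈ S) {a : V} (ha : Sum.inl a ∈ s) :
    ∀ x ∈ s, x.isLeft := by
  by_contra h
  exact absurd (right_pure hS hs h _ ha) (by simp)

lemma IP_SL {S : Finset (Finset (V ⊕ W))} (hS : IP (graphJoin G H) S) : IP G (SL S) := by
  classical
  constructor
  · intro t ht
    obtain ⟨s, hsf, rfl⟩ := Finset.mem_image.mp ht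
    rw [Finset.mem_filter] at hsf
    obtain ⟨x, hx⟩ := hS.1 s hsf.1
    obtain ⟨a, rfl⟩ := Sum.isLeft_iff.mp (hsf.2 x hx)
    exact ⟨a, mem_preL.mpr hx⟩
  constructor
  · intro v
    obtain ⟨s, ⟨hs, hvs⟩, huniq⟩ := hS.2.1 (Sum.inl v)
    have hpure : ∀ x ∈ s, x.isLeft := left_pure_of_mem hS hs hvs
    refine ⟨preL s, ⟨Finset.mem_image.mpr ⟨s, Finset.mem_filter.mpr ⟨hs, hpure⟩, rfl⟩,
      mem_preL.mpr hvs⟩, ?_⟩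
    rintro t ⟨ht, hvt⟩
    obtain ⟨s', hs'f, rfl⟩ := Finset.mem_image.mp ht
    rw [Finset.mem_filter] at hs'f
    rw [huniq s' ⟨hs'f.1, mem_preL.mp hvt⟩]
  · intro t ht a ha b hb
    obtain ⟨s, hsf, rfl⟩ := Finset.mem_image.mp ht
    rw [Finset.mem_filter] at hsf
    exact hS.2.2 s hsf.1 _ (mem_preL.mp ha) _ (mem_preL.mp hb)

lemma IP_SR {S : Finset (Finset (V ⊕ W))} (hS : IP (graphJoin G H) S) : IP H (SR S) := by
  classical
  constructor
  · intro t ht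
    obtain ⟨s, hsf, rfl⟩ := Finset.mem_image.mp ht
    rw [Finset.mem_filter] at hsf
    obtain ⟨x, hx⟩ := hS.1 s hsf.1
    obtain ⟨a, rfl⟩ := Sum.isRight_iff.mp (right_pure hS hsf.1 hsf.2 x hx)
    exact ⟨a, mem_preR.mpr hx⟩
  constructor
  · intro v
    obtain ⟨s, ⟨hs, hvs⟩, huniq⟩ := hS.2.1 (Sum.inr v)
    have hnp : ¬ ∀ x ∈ s, x.isLeft := by
      intro h
      exact absurd (h _ hvs) (by simp)
    refine ⟨preR s, ⟨Finset.mem_image.mpr ⟨s, Finset.mem_filter.mpr ⟨hs, hnp⟩, rfl⟩,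
      mem_preR.mpr hvs⟩, ?_⟩
    rintro t ⟨ht, hvt⟩
    obtain ⟨s', hs'f, rfl⟩ := Finset.mem_image.mp ht
    rw [Finset.mem_filter] at hs'f
    rw [huniq s' ⟨hs'f.1, mem_preR.mp hvt⟩]
  · intro t ht a ha b hb
    obtain ⟨s, hsf, rfl⟩ := Finset.mem_image.mp ht
    rw [Finset.mem_filter] at hsf
    exact hS.2.2 s hsf.1 _ (mem_preR.mp ha) _ (mem_preR.mp hb)

lemma IP_combine {S₁ : Finset (Finset V)} {S₂ : Finset (Finset W)}
    (h₁ : IP G S₁) (h₂ : IP H S₂) : IP (graphJoin G H) (combine S₁ S₂) := by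
  classical
  constructor
  · intro s hs
    rcases Finset.mem_union.mp hs with hs | hs
    · obtain ⟨u, hu, rfl⟩ := Finset.mem_image.mp hs
      obtain ⟨x, hx⟩ := h₁.1 u hu
      exact ⟨Sum.inl x, mem_mapl.mpr ⟨x, hx, rfl⟩⟩
    · obtain ⟨u, hu, rfl⟩ := Finset.mem_image.mp hs
      obtain ⟨x, hx⟩ := h₂.1 u hu
      exact ⟨Sum.inr x, mem_mapr.mpr ⟨x, hx, rfl⟩⟩
  constructor
  · rintro (v | v)
    · obtain ⟨u, ⟨hu, hvu⟩, huniq⟩ := h₁.2.1 v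
      refine ⟨mapl u, ⟨Finset.mem_union_left _ (Finset.mem_image.mpr ⟨u, hu, rfl⟩),
        mem_mapl.mpr ⟨v, hvu, rfl⟩⟩, ?_⟩
      rintro t ⟨ht, hvt⟩
      rcases Finset.mem_union.mp ht with ht | ht
      · obtain ⟨u', hu', rfl⟩ := Finset.mem_image.mp ht
        obtain ⟨a, hau', hav⟩ := mem_mapl.mp hvt
        obtain rfl : a = v := Sum.inl_injective hav
        rw [huniq u' ⟨hu', hau'⟩]
      · obtain ⟨u', hu', rfl⟩ := Finset.mem_image.mp ht
        obtain ⟨a, -, hav⟩ := mem_mapr.mp hvt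
        exact absurd hav (by simp)
    · obtain ⟨u, ⟨hu, hvu⟩, huniq⟩ := h₂.2.1 v
      refine ⟨mapr u, ⟨Finset.mem_union_right _ (Finset.mem_image.mpr ⟨u, hu, rfl⟩),
        mem_mapr.mpr ⟨v, hvu, rfl⟩⟩, ?_⟩
      rintro t ⟨ht, hvt⟩
      rcases Finset.mem_union.mp ht with ht | ht
      · obtain ⟨u', hu', rfl⟩ := Finset.mem_image.mp ht
        obtain ⟨a, -, hav⟩ := mem_mapl.mp hvt
        exact absurd hav (by simp)
      · obtain ⟨u', hu', rfl⟩ := Finset.mem_image.mp ht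
        obtain ⟨a, hau', hav⟩ := mem_mapr.mp hvt
        obtain rfl : a = v := Sum.inr_injective hav
        rw [huniq u' ⟨hu', hau'⟩]
  · intro s hs x hx y hy hadj
    rcases Finset.mem_union.mp hs with hs | hs
    · obtain ⟨u, hu, rfl⟩ := Finset.mem_image.mp hs
      obtain ⟨a, hau, rfl⟩ := mem_mapl.mp hx
      obtain ⟨b, hbu, rfl⟩ := mem_mapl.mp hy
      exact h₁.2.2 u hu a hau b hbu hadj
    · obtain ⟨u, hu, rfl⟩ := Finset.mem_image.mp hs
      obtain ⟨a, hau, rfl⟩ := mem_mapr.mp hx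
      obtain ⟨b, hbu, rfl⟩ := mem_mapr.mp hy
      exact h₂.2.2 u hu a hau b hbu hadj

lemma filter_combine_left {S₁ : Finset (Finset V)} {S₂ : Finset (Finset W)}
    (h₂ : IP H S₂) :
    ((combine S₁ S₂).filter fun s => ∀ x ∈ s, x.isLeft) = S₁.image mapl := by
  classical
  ext s
  rw [Finset.mem_filter, combine, Finset.mem_union]
  constructor
  · rintro ⟨hs | hs, hpure⟩
    · exact hs
    · obtain ⟨u, hu, rfl⟩ := Finset.mem_image.mp hs
      obtain ⟨x, hx⟩ := h₂.1 u hu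
      exact absurd (hpure _ (mem_mapr.mpr ⟨x, hx, rfl⟩)) (by simp)
  · intro hs
    refine ⟨Or.inl hs, ?_⟩
    obtain ⟨u, hu, rfl⟩ := Finset.mem_image.mp hs
    intro x hx
    obtain ⟨a, -, rfl⟩ := mem_mapl.mp hx
    rfl

lemma filter_combine_right {S₁ : Finset (Finset V)} {S₂ : Finset (Finset W)}
    (h₂ : IP H S₂) :
    ((combine S₁ S₂).filter fun s => ¬ ∀ x ∈ s, x.isLeft) = S₂.image mapr := by
  classical
  ext s
  rw [Finset.mem_filter, combine, Finset.mem_union]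
  constructor
  · rintro ⟨hs | hs, hpure⟩
    · obtain ⟨u, hu, rfl⟩ := Finset.mem_image.mp hs
      exact absurd (fun x hx => by
        obtain ⟨a, -, rfl⟩ := mem_mapl.mp hx
        rfl) hpure
    · exact hs
  · intro hs
    refine ⟨Or.inr hs, ?_⟩
    obtain ⟨u, hu, rfl⟩ := Finset.mem_image.mp hs
    obtain ⟨x, hx⟩ := h₂.1 u hu
    intro h
    exact absurd (h _ (mem_mapr.mpr ⟨x, hx, rfl⟩)) (by simp)

lemma SL_combine {S₁ : Finset (Finset V)} {S₂ : Finset (Finset W)}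
    (h₂ : IP H S₂) : SL (combine S₁ S₂) = S₁ := by
  classical
  rw [SL, filter_combine_left h₂, Finset.image_image]
  have h : ∀ s ∈ S₁, (preL ∘ mapl) s = s := fun s _ => preL_mapl (W := W) s
  rw [Finset.image_congr h, Finset.image_id']

lemma SR_combine {S₁ : Finset (Finset V)} {S₂ : Finset (Finset W)}
    (h₂ : IP H S₂) : SR (combine S₁ S₂) = S₂ := by
  classical
  rw [SR, filter_combine_right h₂, Finset.image_image]
  have h : ∀ s ∈ S₂, (preR ∘ mapr) s = s := fun s _ => preR_mapr (V := V) s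
  rw [Finset.image_congr h, Finset.image_id']

lemma combine_SL_SR {S : Finset (Finset (V ⊕ W))} (hS : IP (graphJoin G H) S) :
    combine (SL S) (SR S) = S := by
  classical
  rw [combine, SL, SR, Finset.image_image, Finset.image_image]
  have h1 : ∀ s ∈ S.filter fun s => ∀ x ∈ s, x.isLeft, (mapl ∘ preL) s = s := by
    intro s hs
    exact mapl_preL (Finset.mem_filter.mp hs).2
  have h2 : ∀ s ∈ S.filter fun s => ¬ ∀ x ∈ s, x.isLeft, (mapr ∘ preR) s = s := by
    intro s hs
    have := Finset.mem_filter.mp hs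
    exact mapr_preR (right_pure hS this.1 this.2)
  rw [Finset.image_congr h1, Finset.image_congr h2, Finset.image_id', Finset.image_id',
    Finset.filter_union_filter_not_eq]

lemma card_SL {S : Finset (Finset (V ⊕ W))} (hS : IP (graphJoin G H) S) :
    (SL S).card = (S.filter fun s => ∀ x ∈ s, x.isLeft).card := by
  classical
  apply Finset.card_image_of_injOn
  intro s hs s' hs' h
  rw [← mapl_preL (Finset.mem_filter.mp hs).2, ← mapl_preL (Finset.mem_filter.mp hs').2, h]

lemma card_SR {S : Finset (Finset (V ⊕ W))} (hS : IP (graphJoin G H) S) :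
    (SR S).card = (S.filter fun s => ¬ ∀ x ∈ s, x.isLeft).card := by
  classical
  apply Finset.card_image_of_injOn
  intro s hs s' hs' h
  have p1 := right_pure hS (Finset.mem_filter.mp hs).1 (Finset.mem_filter.mp hs).2
  have p2 := right_pure hS (Finset.mem_filter.mp hs').1 (Finset.mem_filter.mp hs').2
  rw [← mapr_preR p1, ← mapr_preR p2, h]

lemma card_split {S : Finset (Finset (V ⊕ W))} (hS : IP (graphJoin G H) S) :
    S.card = (SL S).card + (SR S).card := by
  classical
  rw [card_SL hS, card_SR hS, Finset.card_filter_add_card_filter_not]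

lemma sigmaP_join (G : SimpleGraph V) (H : SimpleGraph W) :
    sigmaP (graphJoin G H) = sigmaP G * sigmaP H := by
  classical
  rw [sigmaP, sigmaP, sigmaP, Finset.sum_mul_sum, ← Finset.sum_product']
  apply Finset.sum_nbij' (fun S => (SL S, SR S)) (fun p => combine p.1 p.2)
  · intro S hS
    have h := mem_parts.mp hS
    exact Finset.mem_product.mpr ⟨mem_parts.mpr (IP_SL h), mem_parts.mpr (IP_SR h)⟩
  · intro p hp
    have h := Finset.mem_product.mp hp
    exact mem_parts.mpr (IP_combine (mem_parts.mp h.1) (mem_parts.mp h.2))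
  · intro S hS
    exact combine_SL_SR (mem_parts.mp hS)
  · intro p hp
    have h := Finset.mem_product.mp hp
    exact Prod.ext (SL_combine (mem_parts.mp h.2)) (SR_combine (mem_parts.mp h.2))
  · intro S hS
    rw [card_split (mem_parts.mp hS), pow_add]

end Join

end ChromJoin

/-- `χ_{G∇H} = φ_χ[φ_χ⁻¹[χ_G]·φ_χ⁻¹[χ_H]]`, where the chromatic polynomials
are characterized by their values at natural numbers. -/
theorem chromaticPoly_join {V W : Type*} [Fintype V] [Fintype W]
    [DecidableEq V] [DecidableEq W] (G : SimpleGraph V) (H : SimpleGraph W)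
    (P Q R : Polynomial ℚ)
    (hP : ∀ t : ℕ, P.eval (t : ℚ) = colorCount G t)
    (hQ : ∀ t : ℕ, Q.eval (t : ℚ) = colorCount H t)
    (hR : ∀ t : ℕ, R.eval (t : ℚ) = colorCount (graphJoin G H) t) :
    R = phiChi (phiChiInv P * phiChiInv Q) := by
  open ChromJoin in
  have hPG : P = tauP G := eq_of_eval_nat fun t => by rw [hP, tauP_eval]
  have hQH : Q = tauP H := eq_of_eval_nat fun t => by rw [hQ, tauP_eval]
  have hRJ : R = tauP (graphJoin G H) := eq_of_eval_nat fun t => by rw [hR, tauP_eval]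
  have hiP : phiChiInv P = ChromJoin.sigmaP G := by
    apply ChromJoin.phiChi_injective
    rw [ChromJoin.phiChi_phiChiInv, ChromJoin.phiChi_sigmaP, hPG]
  have hiQ : phiChiInv Q = ChromJoin.sigmaP H := by
    apply ChromJoin.phiChi_injective
    rw [ChromJoin.phiChi_phiChiInv, ChromJoin.phiChi_sigmaP, hQH]
  rw [hiP, hiQ, ← ChromJoin.sigmaP_join, ChromJoin.phiChi_sigmaP, hRJ]
end

section
/- Let G and H be simple graphs on disjoint vertex sets, with m(·) denoting the number of perfect matchings. Then m(G ∇ H)² ≤ m(G ∇ G) · m(H ∇ H), where G ∇ G denotes the join of two disjoint copies of G (and similarly for H). -/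
/-- `m(G)`: the number of perfect matchings of `G`. -/
noncomputable def perfectMatchingCount {V : Type*} (G : SimpleGraph V) : ℕ :=
  Nat.card {M : G.Subgraph // M.IsPerfectMatching}

namespace JoinCS

open SimpleGraph Function

instance subgraphFinite {V : Type*} [Finite V] (G : SimpleGraph V) : Finite G.Subgraph := by
  have hinj : Function.Injective (fun A : G.Subgraph => (A.verts, A.Adj)) := by
    intro A B h
    exact SimpleGraph.Subgraph.ext (congrArg Prod.fst h) (congrArg Prod.snd h)
  exact Finite.of_injective _ hinj

variable {V W : Type*} {G : SimpleGraph V} {H : SimpleGraph W}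

/-- The cross-edge relation induced by a bijection between uncovered sets. -/
def crossAdj (A : G.Subgraph) (B : H.Subgraph) (e : ↥(A.vertsᶜ) ≃ ↥(B.vertsᶜ))
    (a : V) (b : W) : Prop :=
  ∃ (ha : a ∈ A.vertsᶜ) (hb : b ∈ B.vertsᶜ), e ⟨a, ha⟩ = ⟨b, hb⟩

/-- Assemble a subgraph of the join from matchings of each side plus a bijection of
the uncovered vertices. -/
def joinSub (A : G.Subgraph) (B : H.Subgraph) (e : ↥(A.vertsᶜ) ≃ ↥(B.vertsᶜ)) :
    (graphJoin G H).Subgraph where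
  verts := Set.univ
  Adj x y := match x, y with
    | Sum.inl a, Sum.inl b => A.Adj a b
    | Sum.inr a, Sum.inr b => B.Adj a b
    | Sum.inl a, Sum.inr b => crossAdj A B e a b
    | Sum.inr b, Sum.inl a => crossAdj A B e a b
  adj_sub := by
    rintro (a | a) (b | b) h
    · exact A.adj_sub h
    · trivial
    · trivial
    · exact B.adj_sub h
  edge_vert := fun _ => Set.mem_univ _
  symm := by
    refine ⟨?_⟩
    rintro (a | a) (b | b) h
    · exact A.adj_symm h
    · exact h
    · exact h
    · exact B.adj_symm h

lemma joinSub_isPerfectMatching {A : G.Subgraph} {B : H.Subgraph}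
    {e : ↥(A.vertsᶜ) ≃ ↥(B.vertsᶜ)} (hA : A.IsMatching) (hB : B.IsMatching) :
    (joinSub A B e).IsPerfectMatching := by
  constructor
  · rintro (a | b) -
    · by_cases ha : a ∈ A.verts
      · obtain ⟨b, hb, hub⟩ := hA ha
        refine ⟨Sum.inl b, hb, ?_⟩
        rintro (c | c) hc
        · exact congrArg Sum.inl (hub c hc)
        · obtain ⟨ha', -, -⟩ := hc
          exact absurd ha ha'
      · have ha' : a ∈ A.vertsᶜ := ha
        refine ⟨Sum.inr (e ⟨a, ha'⟩).1, ⟨ha', (e ⟨a, ha'⟩).2, rfl⟩, ?_⟩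
        rintro (c | c) hc
        · exact absurd (A.edge_vert hc) ha
        · obtain ⟨ha'', hb'', hh⟩ := hc
          exact congrArg Sum.inr (congrArg Subtype.val hh).symm
    · by_cases hb : b ∈ B.verts
      · obtain ⟨c, hc, hub⟩ := hB hb
        refine ⟨Sum.inr c, hc, ?_⟩
        rintro (d | d) hd
        · obtain ⟨-, hb', -⟩ := hd
          exact absurd hb hb'
        · exact congrArg Sum.inr (hub d hd)
      · have hb' : b ∈ B.vertsᶜ := hb
        refine ⟨Sum.inl (e.symm ⟨b, hb'⟩).1,
          ⟨(e.symm ⟨b, hb'⟩).2, hb', e.apply_symm_apply ⟨b, hb'⟩⟩, ?_⟩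
        rintro (d | d) hd
        · obtain ⟨hd1, hd2, hd3⟩ := hd
          have : (⟨d, hd1⟩ : ↥(A.vertsᶜ)) = e.symm ⟨b, hb'⟩ := by
            rw [Equiv.eq_symm_apply, hd3]
          exact congrArg Sum.inl (congrArg Subtype.val this)
        · exact absurd (B.edge_vert hd) hb
  · exact fun v => Set.mem_univ v

/-- The part of a subgraph of the join living on the left side. -/
def leftSub (M : (graphJoin G H).Subgraph) : G.Subgraph where
  verts := {a | ∃ b, M.Adj (Sum.inl a) (Sum.inl b)}
  Adj a b := M.Adj (Sum.inl a) (Sum.inl b)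
  adj_sub h := M.adj_sub h
  edge_vert h := ⟨_, h⟩
  symm := ⟨fun _ _ h => M.adj_symm h⟩

/-- The part of a subgraph of the join living on the right side. -/
def rightSub (M : (graphJoin G H).Subgraph) : H.Subgraph where
  verts := {b | ∃ c, M.Adj (Sum.inr b) (Sum.inr c)}
  Adj a b := M.Adj (Sum.inr a) (Sum.inr b)
  adj_sub h := M.adj_sub h
  edge_vert h := ⟨_, h⟩
  symm := ⟨fun _ _ h => M.adj_symm h⟩

variable {M : (graphJoin G H).Subgraph}

lemma unique_partner (hM : M.IsPerfectMatching) {x y z : V ⊕ W}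
    (h1 : M.Adj x y) (h2 : M.Adj x z) : y = z :=
  (hM.1 (hM.2 x)).unique h1 h2

lemma leftSub_isMatching (hM : M.IsPerfectMatching) : (leftSub M).IsMatching := by
  rintro a ⟨b, hb⟩
  exact ⟨b, hb, fun c hc => Sum.inl.inj (unique_partner hM hc hb)⟩

lemma rightSub_isMatching (hM : M.IsPerfectMatching) : (rightSub M).IsMatching := by
  rintro a ⟨b, hb⟩
  exact ⟨b, hb, fun c hc => Sum.inr.inj (unique_partner hM hc hb)⟩

lemma cross_left_not_mem (hM : M.IsPerfectMatching) {a : V} {w : W}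
    (h : M.Adj (Sum.inl a) (Sum.inr w)) : a ∈ (leftSub M).vertsᶜ := by
  rintro ⟨c, hc⟩
  simpa using unique_partner hM hc h

lemma cross_right_not_mem (hM : M.IsPerfectMatching) {a : V} {w : W}
    (h : M.Adj (Sum.inl a) (Sum.inr w)) : w ∈ (rightSub M).vertsᶜ := by
  rintro ⟨c, hc⟩
  simpa using unique_partner hM hc (M.adj_symm h)

lemma exists_cross_left (hM : M.IsPerfectMatching) {a : V}
    (ha : a ∈ (leftSub M).vertsᶜ) : ∃ w, M.Adj (Sum.inl a) (Sum.inr w) := by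
  obtain ⟨y, hy, -⟩ := hM.1 (hM.2 (Sum.inl a))
  cases y with
  | inl b => exact absurd ⟨b, hy⟩ ha
  | inr w => exact ⟨w, hy⟩

lemma exists_cross_right (hM : M.IsPerfectMatching) {b : W}
    (hb : b ∈ (rightSub M).vertsᶜ) : ∃ a, M.Adj (Sum.inr b) (Sum.inl a) := by
  obtain ⟨y, hy, -⟩ := hM.1 (hM.2 (Sum.inr b))
  cases y with
  | inl a => exact ⟨a, hy⟩
  | inr c => exact absurd ⟨c, hy⟩ hb

/-- One direction of the cross-edge bijection. -/
noncomputable def toRight (hM : M.IsPerfectMatching) (a : ↥((leftSub M).vertsᶜ)) :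
    ↥((rightSub M).vertsᶜ) :=
  ⟨(exists_cross_left hM a.2).choose,
    cross_right_not_mem hM (exists_cross_left hM a.2).choose_spec⟩

lemma toRight_adj (hM : M.IsPerfectMatching) (a : ↥((leftSub M).vertsᶜ)) :
    M.Adj (Sum.inl a.1) (Sum.inr (toRight hM a).1) :=
  (exists_cross_left hM a.2).choose_spec

/-- The other direction of the cross-edge bijection. -/
noncomputable def toLeft (hM : M.IsPerfectMatching) (b : ↥((rightSub M).vertsᶜ)) :
    ↥((leftSub M).vertsᶜ) :=
  ⟨(exists_cross_right hM b.2).choose,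
    cross_left_not_mem hM (M.adj_symm (exists_cross_right hM b.2).choose_spec)⟩

lemma toLeft_adj (hM : M.IsPerfectMatching) (b : ↥((rightSub M).vertsᶜ)) :
    M.Adj (Sum.inr b.1) (Sum.inl (toLeft hM b).1) :=
  (exists_cross_right hM b.2).choose_spec

/-- The bijection of the uncovered sets induced by the cross edges of a perfect matching. -/
noncomputable def mEquiv (hM : M.IsPerfectMatching) :
    ↥((leftSub M).vertsᶜ) ≃ ↥((rightSub M).vertsᶜ) where
  toFun := toRight hM
  invFun := toLeft hM
  left_inv a := Subtype.ext (Sum.inl.inj (unique_partner hM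
    (toLeft_adj hM (toRight hM a)) (M.adj_symm (toRight_adj hM a))))
  right_inv b := Subtype.ext (Sum.inr.inj (unique_partner hM
    (toRight_adj hM (toLeft hM b)) (M.adj_symm (toLeft_adj hM b))))

lemma mEquiv_adj (hM : M.IsPerfectMatching) (a : ↥((leftSub M).vertsᶜ)) :
    M.Adj (Sum.inl a.1) (Sum.inr (mEquiv hM a).1) :=
  toRight_adj hM a

variable (G H) in
/-- Structured data equivalent to a perfect matching of the join. -/
def MsigType :=
  Σ p : {A : G.Subgraph // A.IsMatching} × {B : H.Subgraph // B.IsMatching},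
    (↥(p.1.1.vertsᶜ) ≃ ↥(p.2.1.vertsᶜ))

/-- The map assembling a perfect matching of the join from structured data. -/
def Psi (x : MsigType G H) : {M : (graphJoin G H).Subgraph // M.IsPerfectMatching} :=
  ⟨joinSub x.1.1.1 x.1.2.1 x.2, joinSub_isPerfectMatching x.1.1.2 x.1.2.2⟩

lemma verts_eq_of_isMatching {A A' : G.Subgraph} (hA : A.IsMatching) (hA' : A'.IsMatching)
    (h : A.Adj = A'.Adj) : A = A' := by
  refine SimpleGraph.Subgraph.ext ?_ h
  rw [← hA.support_eq_verts, ← hA'.support_eq_verts]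
  ext a
  simp [SimpleGraph.Subgraph.mem_support, h]

lemma Psi_injective : Function.Injective (Psi (G := G) (H := H)) := by
  rintro ⟨⟨⟨A, hA⟩, ⟨B, hB⟩⟩, e⟩ ⟨⟨⟨A', hA'⟩, ⟨B', hB'⟩⟩, e'⟩ h
  have hAdj : (joinSub A B e).Adj = (joinSub A' B' e').Adj :=
    congrArg SimpleGraph.Subgraph.Adj (congrArg Subtype.val h)
  obtain rfl : A = A' := by
    refine verts_eq_of_isMatching hA hA' ?_
    funext a b
    exact congrFun (congrFun hAdj (Sum.inl a)) (Sum.inl b)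
  obtain rfl : B = B' := by
    refine verts_eq_of_isMatching hB hB' ?_
    funext a b
    exact congrFun (congrFun hAdj (Sum.inr a)) (Sum.inr b)
  obtain rfl : e = e' := by
    apply Equiv.ext
    rintro ⟨a, ha⟩
    have h1 : crossAdj A B e a (e ⟨a, ha⟩).1 := ⟨ha, (e ⟨a, ha⟩).2, rfl⟩
    have h2 : crossAdj A B e' a (e ⟨a, ha⟩).1 := by
      have := congrFun (congrFun hAdj (Sum.inl a)) (Sum.inr (e ⟨a, ha⟩).1)
      exact cast this h1
    obtain ⟨ha', hb', hh⟩ := h2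
    exact (Subtype.ext (congrArg Subtype.val hh)).symm
  rfl

lemma Psi_surjective : Function.Surjective (Psi (G := G) (H := H)) := by
  rintro ⟨M, hM⟩
  refine ⟨⟨(⟨leftSub M, leftSub_isMatching hM⟩, ⟨rightSub M, rightSub_isMatching hM⟩),
    mEquiv hM⟩, ?_⟩
  apply Subtype.ext
  have key : ∀ (a : V) (b : W),
      crossAdj (leftSub M) (rightSub M) (mEquiv hM) a b ↔ M.Adj (Sum.inl a) (Sum.inr b) := by
    intro a b
    constructor
    · rintro ⟨ha, hb, hh⟩
      have := mEquiv_adj hM ⟨a, ha⟩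
      rw [hh] at this
      exact this
    · intro h
      refine ⟨cross_left_not_mem hM h, cross_right_not_mem hM h, ?_⟩
      exact Subtype.ext (Sum.inr.inj
        (unique_partner hM (mEquiv_adj hM ⟨a, cross_left_not_mem hM h⟩) h))
  refine SimpleGraph.Subgraph.ext ?_ ?_
  · exact (hM.2.verts_eq_univ).symm
  · funext x y
    cases x with
    | inl a =>
      cases y with
      | inl b => rfl
      | inr b => exact propext (key a b)
    | inr a =>
      cases y with
      | inl b =>
        refine propext (Iff.trans (key b a) ?_)
        exact ⟨fun h => M.adj_symm h, fun h => M.adj_symm h⟩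
      | inr b => rfl

/-- The number of matchings of `G` leaving exactly `d` vertices uncovered. -/
noncomputable def matchCount (G : SimpleGraph V) (d : ℕ) : ℕ :=
  Nat.card {A : G.Subgraph // A.IsMatching ∧ Nat.card ↥(A.vertsᶜ) = d}

lemma card_equiv_eq (α β : Type*) [Finite α] [Finite β] :
    Nat.card (α ≃ β) = if Nat.card α = Nat.card β then (Nat.card α).factorial else 0 := by
  letI := Fintype.ofFinite α
  letI := Fintype.ofFinite β
  classical
  split_ifs with h
  · have h' : Fintype.card α = Fintype.card β := by
      simpa [Nat.card_eq_fintype_card] using h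
    rw [Nat.card_eq_fintype_card, Nat.card_eq_fintype_card,
      Fintype.card_equiv (Fintype.equivOfCardEq h')]
  · have : IsEmpty (α ≃ β) := ⟨fun e => h (Nat.card_congr e)⟩
    exact Nat.card_of_isEmpty

lemma aux_pair {i j N : ℕ} (hi : i < N) :
    (if i = j then i.factorial else 0) =
      ∑ d ∈ Finset.range N,
        (if i = d then 1 else 0) * (if j = d then 1 else 0) * d.factorial := by
  by_cases h : i = j
  · subst h
    rw [if_pos rfl]
    rw [Finset.sum_eq_single i]
    · simp
    · intro d _ hd
      simp [Ne.symm hd]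
    · intro hmem
      exact absurd (Finset.mem_range.mpr hi) hmem
  · rw [if_neg h]
    symm
    apply Finset.sum_eq_zero
    intro d _
    by_cases h1 : i = d
    · by_cases h2 : j = d
      · exact absurd (h1.trans h2.symm) h
      · simp [h2]
    · simp [h1]

lemma card_pm_join [Finite V] [Finite W] (G : SimpleGraph V) (H : SimpleGraph W)
    {N : ℕ} (hV : Nat.card V < N) :
    perfectMatchingCount (graphJoin G H) =
      ∑ d ∈ Finset.range N, matchCount G d * matchCount H d * d.factorial := by
  classical
  have hbij : Function.Bijective (Psi (G := G) (H := H)) := ⟨Psi_injective, Psi_surjective⟩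
  have hcard : perfectMatchingCount (graphJoin G H) = Nat.card (MsigType G H) :=
    (Nat.card_eq_of_bijective _ hbij).symm
  rw [hcard]
  letI : Fintype {A : G.Subgraph // A.IsMatching} := Fintype.ofFinite _
  letI : Fintype {B : H.Subgraph // B.IsMatching} := Fintype.ofFinite _
  letI : ∀ p : {A : G.Subgraph // A.IsMatching} × {B : H.Subgraph // B.IsMatching},
      Fintype (↥(p.1.1.vertsᶜ) ≃ ↥(p.2.1.vertsᶜ)) := fun p => Fintype.ofFinite _
  rw [show (MsigType G H) =
    (Σ p : {A : G.Subgraph // A.IsMatching} × {B : H.Subgraph // B.IsMatching},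
      (↥(p.1.1.vertsᶜ) ≃ ↥(p.2.1.vertsᶜ))) from rfl]
  rw [Nat.card_eq_fintype_card, Fintype.card_sigma, Fintype.sum_prod_type]
  simp only [← Nat.card_eq_fintype_card]
  -- replace each equiv-type card by an if-expression
  have step1 : ∀ (A : {A : G.Subgraph // A.IsMatching}) (B : {B : H.Subgraph // B.IsMatching}),
      Nat.card (↥(A.1.vertsᶜ) ≃ ↥(B.1.vertsᶜ)) =
        ∑ d ∈ Finset.range N,
          (if Nat.card ↥(A.1.vertsᶜ) = d then 1 else 0) *
          (if Nat.card ↥(B.1.vertsᶜ) = d then 1 else 0) * d.factorial := by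
    intro A B
    rw [card_equiv_eq]
    refine aux_pair (lt_of_le_of_lt ?_ hV)
    exact Nat.card_le_card_of_injective (Subtype.val : ↥(A.1.vertsᶜ) → V) Subtype.val_injective
  calc (∑ A : {A : G.Subgraph // A.IsMatching}, ∑ B : {B : H.Subgraph // B.IsMatching},
        Nat.card (↥(A.1.vertsᶜ) ≃ ↥(B.1.vertsᶜ)))
      = ∑ A : {A : G.Subgraph // A.IsMatching}, ∑ B : {B : H.Subgraph // B.IsMatching},
          ∑ d ∈ Finset.range N,
            (if Nat.card ↥(A.1.vertsᶜ) = d then 1 else 0) *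
            (if Nat.card ↥(B.1.vertsᶜ) = d then 1 else 0) * d.factorial := by
        exact Finset.sum_congr rfl fun A _ => Finset.sum_congr rfl fun B _ => step1 A B
    _ = ∑ d ∈ Finset.range N,
          ∑ A : {A : G.Subgraph // A.IsMatching}, ∑ B : {B : H.Subgraph // B.IsMatching},
            (if Nat.card ↥(A.1.vertsᶜ) = d then 1 else 0) *
            (if Nat.card ↥(B.1.vertsᶜ) = d then 1 else 0) * d.factorial := by
        exact (Finset.sum_congr rfl fun A _ => Finset.sum_comm).trans Finset.sum_comm
    _ = ∑ d ∈ Finset.range N, matchCount G d * matchCount H d * d.factorial := by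
        refine Finset.sum_congr rfl fun d _ => ?_
        have hG : (∑ A : {A : G.Subgraph // A.IsMatching},
            (if Nat.card ↥(A.1.vertsᶜ) = d then 1 else 0)) = matchCount G d := by
          rw [Finset.sum_boole]
          rw [matchCount, ← Nat.card_congr
            (Equiv.subtypeSubtypeEquivSubtypeInter (fun A : G.Subgraph => A.IsMatching)
              (fun A => Nat.card ↥(A.vertsᶜ) = d))]
          rw [Nat.card_eq_fintype_card, Fintype.card_subtype]
          simp
        have hH : (∑ B : {B : H.Subgraph // B.IsMatching},
            (if Nat.card ↥(B.1.vertsᶜ) = d then 1 else 0)) = matchCount H d := by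
          rw [Finset.sum_boole]
          rw [matchCount, ← Nat.card_congr
            (Equiv.subtypeSubtypeEquivSubtypeInter (fun B : H.Subgraph => B.IsMatching)
              (fun B => Nat.card ↥(B.vertsᶜ) = d))]
          rw [Nat.card_eq_fintype_card, Fintype.card_subtype]
          simp
        rw [← hG, ← hH, Finset.sum_mul_sum, Finset.sum_mul]
        exact Finset.sum_congr rfl fun A _ => (Finset.sum_mul _ _ _).symm

end JoinCS

/-- Cauchy–Schwarz inequality for perfect matchings of joins:
`m(G ∇ H)² ≤ m(G ∇ G)·m(H ∇ H)`. -/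
theorem perfectMatchingCount_join_sq_le {V W : Type*} [Fintype V] [Fintype W]
    [DecidableEq V] [DecidableEq W] (G : SimpleGraph V) (H : SimpleGraph W) :
    perfectMatchingCount (graphJoin G H) ^ 2 ≤
      perfectMatchingCount (graphJoin G G) * perfectMatchingCount (graphJoin H H) := by
  set N : ℕ := Nat.card V + Nat.card W + 1 with hN
  have hV : Nat.card V < N := by omega
  have hW : Nat.card W < N := by omega
  rw [JoinCS.card_pm_join G H hV, JoinCS.card_pm_join G G hV, JoinCS.card_pm_join H H hW]
  refine Finset.sum_sq_le_sum_mul_sum_of_sq_eq_mul _ (fun i _ => Nat.zero_le _)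
    (fun i _ => Nat.zero_le _) (fun i _ => ?_)
  ring
end
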